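/- Let Y be a real symmetric n×n matrix and let E = 2 x xᵀ + ‖x‖₂² I_n for some nonzero x ∈ ℝⁿ with ‖x‖₂² = α. Let δ = ‖Y - E‖ (operator norm), and let x₀ be an eigenvector of Y for its largest eigenvalue λ₀, normalized so that ‖x₀‖₂² = α. Then ⟨x₀, x⟩² ≥ α² - αδ. -/

import Mathlib

open Real

theorem leading_eigenvector_correlation (n : ℕ) (Y : Matrix (Fin n) (Fin n) ℝ)
    (hY : Y.IsSymm) (x x₀ : EuclideanSpace ℝ (Fin n)) (α lam0 : ℝ) (hx : x ≠ 0)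
    (hxα : ‖x‖ ^ 2 = α)
    (E : Matrix (Fin n) (Fin n) ℝ)
    (hE : E = (2 : ℝ) • Matrix.of (fun i j : Fin n => x i * x j) +
      (‖x‖ ^ 2) • (1 : Matrix (Fin n) (Fin n) ℝ))
    (δ : ℝ) (hδ : δ = ‖Matrix.toEuclideanCLM (𝕜 := ℝ) (Y - E)‖)
    (hx₀ : Matrix.toEuclideanCLM (𝕜 := ℝ) Y x₀ = lam0 • x₀)
    (hx₀α : ‖x₀‖ ^ 2 = α)
    (hmax : ∀ (v : EuclideanSpace ℝ (Fin n)) (μ : ℝ), v ≠ 0 →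
      Matrix.toEuclideanCLM (𝕜 := ℝ) Y v = μ • v → μ ≤ lam0) :
    (inner ℝ x₀ x : ℝ) ^ 2 ≥ α ^ 2 - α * δ := by
  have hcoe : ∀ (A : Matrix (Fin n) (Fin n) ℝ) (w : EuclideanSpace ℝ (Fin n)),
      Matrix.toEuclideanCLM (𝕜 := ℝ) A w = Matrix.toEuclideanLin A w := by
    intro A w
    rw [← Matrix.coe_toEuclideanCLM_eq_toEuclideanLin]
    rfl
  have hα : 0 < α := by
    rw [← hxα]
    exact pow_pos (norm_pos_iff.mpr hx) 2
  -- symmetry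
  have hHerm : Y.IsHermitian := by
    rwa [Matrix.IsHermitian, Matrix.conjTranspose_eq_transpose_of_trivial]
  have hsym : (Matrix.toEuclideanLin (𝕜 := ℝ) Y).IsSymmetric :=
    Matrix.isHermitian_iff_isSymmetric.mp hHerm
  have hn : Module.finrank ℝ (EuclideanSpace ℝ (Fin n)) = n := finrank_euclideanSpace_fin
  -- Rayleigh bound
  have rayleigh : ∀ v : EuclideanSpace ℝ (Fin n),
      (inner ℝ (Matrix.toEuclideanCLM (𝕜 := ℝ) Y v) v : ℝ) ≤ lam0 * ‖v‖ ^ 2 := by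
    intro v
    set b := hsym.eigenvectorBasis hn with hb
    have hev : ∀ i, hsym.eigenvalues hn i ≤ lam0 := by
      intro i
      refine hmax (b i) _ (b.toBasis.ne_zero i) ?_
      rw [hcoe]
      exact hsym.apply_eigenvectorBasis hn i
    have h1 : (inner ℝ (Matrix.toEuclideanCLM (𝕜 := ℝ) Y v) v : ℝ)
        = ∑ i, hsym.eigenvalues hn i * (b.repr v i) ^ 2 := by
      rw [hcoe, ← b.repr.inner_map_map (Matrix.toEuclideanLin (𝕜 := ℝ) Y v) v]
      simp only [PiLp.inner_apply, RCLike.inner_apply, conj_trivial]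
      refine Finset.sum_congr rfl fun i _ => ?_
      rw [hsym.eigenvectorBasis_apply_self_apply hn v i]
      show b.repr v i * (hsym.eigenvalues hn i * b.repr v i)
          = hsym.eigenvalues hn i * (b.repr v i) ^ 2
      ring
    have h2 : ∑ i, (b.repr v i) ^ 2 = ‖v‖ ^ 2 := by
      rw [← real_inner_self_eq_norm_sq, ← b.repr.inner_map_map v v]
      simp only [PiLp.inner_apply, RCLike.inner_apply, conj_trivial]
      exact Finset.sum_congr rfl fun i _ => pow_two _
    rw [h1, ← h2, Finset.mul_sum]
    exact Finset.sum_le_sum fun i _ => by nlinarith [sq_nonneg (b.repr v i), hev i]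
  -- action of E
  have hEact : ∀ w : EuclideanSpace ℝ (Fin n),
      (inner ℝ (Matrix.toEuclideanCLM (𝕜 := ℝ) E w) w : ℝ)
        = 2 * (inner ℝ x w : ℝ) ^ 2 + α * ‖w‖ ^ 2 := by
    intro w
    have happ : ∀ i, (Matrix.toEuclideanCLM (𝕜 := ℝ) E w) i
        = 2 * (∑ j, x j * w j) * x i + α * w i := by
      intro i
      have hi : (Matrix.toEuclideanCLM (𝕜 := ℝ) E w) i = ∑ j, E i j * w j := by
        rw [hcoe]; rfl
      rw [hi, hE]
      simp only [Matrix.add_apply, Matrix.smul_apply, Matrix.of_apply, Matrix.one_apply,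
        smul_eq_mul, add_mul, mul_ite, mul_one, mul_zero, ite_mul, zero_mul,
        Finset.sum_add_distrib, Finset.sum_ite_eq, Finset.mem_univ, if_true, hxα]
      congr 1
      simp only [Finset.sum_mul, Finset.mul_sum]
      exact Finset.sum_congr rfl fun j _ => by ring
    have hinner : (inner ℝ x w : ℝ) = ∑ j, x j * w j := by
      simp [PiLp.inner_apply, RCLike.inner_apply]
      exact Finset.sum_congr rfl fun j _ => mul_comm _ _
    have hnw : ‖w‖ ^ 2 = ∑ j, w j * w j := by
      rw [← real_inner_self_eq_norm_sq]
      simp only [PiLp.inner_apply, RCLike.inner_apply, conj_trivial]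
    have hlhs : (inner ℝ (Matrix.toEuclideanCLM (𝕜 := ℝ) E w) w : ℝ)
        = ∑ i, (Matrix.toEuclideanCLM (𝕜 := ℝ) E w) i * w i := by
      simp [PiLp.inner_apply, RCLike.inner_apply]
      exact Finset.sum_congr rfl fun j _ => mul_comm _ _
    rw [hlhs, hinner, hnw]
    calc ∑ i, (Matrix.toEuclideanCLM (𝕜 := ℝ) E w) i * w i
        = ∑ i, (2 * (∑ j, x j * w j) * (x i * w i) + α * (w i * w i)) := by
          refine Finset.sum_congr rfl fun i _ => ?_
          rw [happ i]; ring
      _ = 2 * (∑ j, x j * w j) ^ 2 + α * ∑ i, w i * w i := by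
          rw [Finset.sum_add_distrib, ← Finset.mul_sum, ← Finset.mul_sum]; ring
  -- split the quadratic form of Y
  have hsplit : ∀ v : EuclideanSpace ℝ (Fin n),
      (inner ℝ (Matrix.toEuclideanCLM (𝕜 := ℝ) Y v) v : ℝ)
        = inner ℝ (Matrix.toEuclideanCLM (𝕜 := ℝ) E v) v
          + inner ℝ (Matrix.toEuclideanCLM (𝕜 := ℝ) (Y - E) v) v := by
    intro v
    rw [← inner_add_left]
    congr 1
    rw [map_sub]
    simp
  have hbound : ∀ v : EuclideanSpace ℝ (Fin n),
      |(inner ℝ (Matrix.toEuclideanCLM (𝕜 := ℝ) (Y - E) v) v : ℝ)| ≤ δ * ‖v‖ ^ 2 := by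
    intro v
    calc |(inner ℝ (Matrix.toEuclideanCLM (𝕜 := ℝ) (Y - E) v) v : ℝ)|
        ≤ ‖Matrix.toEuclideanCLM (𝕜 := ℝ) (Y - E) v‖ * ‖v‖ := abs_real_inner_le_norm _ _
      _ ≤ ‖Matrix.toEuclideanCLM (𝕜 := ℝ) (Y - E)‖ * ‖v‖ * ‖v‖ :=
          mul_le_mul_of_nonneg_right (ContinuousLinearMap.le_opNorm _ _) (norm_nonneg _)
      _ = δ * ‖v‖ ^ 2 := by rw [hδ]; ring
  -- lower bound on lam0
  have hixx : (inner ℝ x x : ℝ) = α := by rw [real_inner_self_eq_norm_sq, hxα]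
  have h1 : 3 * α ^ 2 - δ * α ≤ lam0 * α := by
    have hr := rayleigh x
    have hs := hsplit x
    have he := hEact x
    have hb := (abs_le.mp (hbound x)).1
    rw [hixx, hxα] at he
    rw [hxα] at hr hb
    linarith [hs ▸ hr, he, hb]
  -- upper bound via x₀
  have hix₀ : (inner ℝ x₀ x₀ : ℝ) = α := by rw [real_inner_self_eq_norm_sq, hx₀α]
  have h2 : lam0 * α ≤ 2 * (inner ℝ x x₀ : ℝ) ^ 2 + α ^ 2 + δ * α := by
    have hs := hsplit x₀
    have he := hEact x₀
    have hb := (abs_le.mp (hbound x₀)).2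
    rw [hx₀α] at he hb
    have hq : (inner ℝ (Matrix.toEuclideanCLM (𝕜 := ℝ) Y x₀) x₀ : ℝ) = lam0 * α := by
      rw [hx₀, real_inner_smul_left, hix₀]
    rw [hq] at hs
    nlinarith
  have hc : (inner ℝ x₀ x : ℝ) = (inner ℝ x x₀ : ℝ) := real_inner_comm _ _
  rw [hc]
  nlinarith [h1, h2, hα]
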